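/- For a matching problem where all free variables occur on one side and every free variable has at least one strict occurrence in the terms, matchability is decidable and, when a match exists, there is a most general matching substitution. -/

import Mathlib

/-- First-order terms. -/
inductive Tm : Type where
  | var : Nat → Tm
  | const : Nat → Tm
  | app : Tm → Tm → Tm
deriving DecidableEq

/-- Substitutions as (total) maps from variables to terms. -/
abbrev FSubst := Nat → Tm

def applyF (σ : FSubst) : Tm → Tm
  | Tm.var x => σ x
  | Tm.const c => Tm.const c
  | Tm.app t u => Tm.app (applyF σ t) (applyF σ u)

/-- Composition of substitutions: `t[σ ∘ θ] = t[σ][θ]`. -/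
def compF (σ θ : FSubst) : FSubst := fun x => applyF θ (σ x)

/-- `σ` unifies the problem `S`. -/
def UnifiesF (σ : FSubst) (S : List (Tm × Tm)) : Prop :=
  ∀ p ∈ S, applyF σ p.1 = applyF σ p.2

/-- `σ` is a most general unifier of `S`: it unifies `S` and every unifier
factors through it. -/
def IsMGUF (σ : FSubst) (S : List (Tm × Tm)) : Prop :=
  UnifiesF σ S ∧ ∀ θ, UnifiesF θ S → ∃ γ, ∀ t, applyF θ t = applyF γ (applyF σ t)

/-- The free variables of a term. -/
def FV : Tm → List Nat
  | Tm.var x => [x]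
  | Tm.const _ => []
  | Tm.app t u => FV t ++ FV u

/-- A term is ground if it has no free variables. -/
def Ground (t : Tm) : Prop := FV t = []

/-- `σ` solves the matching problem `S`: each left-hand side instantiates to
the corresponding (ground) right-hand side. -/
def Matches (σ : FSubst) (S : List (Tm × Tm)) : Prop :=
  ∀ p ∈ S, applyF σ p.1 = p.2

-- auxiliary part to be inserted above the theorem
def matchOne : Tm → Tm → Option (List (Nat × Tm))
  | Tm.var x, u => some [(x, u)]
  | Tm.const c, Tm.const d => if c = d then some [] else none
  | Tm.app t1 t2, Tm.app u1 u2 =>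
      match matchOne t1 u1, matchOne t2 u2 with
      | some l1, some l2 => some (l1 ++ l2)
      | _, _ => none
  | _, _ => none

def collect : List (Tm × Tm) → Option (List (Nat × Tm))
  | [] => some []
  | p :: S =>
      match matchOne p.1 p.2, collect S with
      | some l1, some l2 => some (l1 ++ l2)
      | _, _ => none

theorem ground_applyF {u : Tm} (h : Ground u) (θ : FSubst) : applyF θ u = u := by
  induction u with
  | var x => simp [Ground, FV] at h
  | const c => rfl
  | app a b iha ihb =>
      simp [Ground, FV, List.append_eq_nil_iff] at h
      simp [applyF, iha h.1, ihb h.2]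

theorem matchOne_sound {t u : Tm} {l : List (Nat × Tm)} (h : matchOne t u = some l)
    (σ : FSubst) (hσ : ∀ p ∈ l, σ p.1 = p.2) : applyF σ t = u := by
  induction t generalizing u l with
  | var x =>
      simp [matchOne] at h
      subst h
      simpa [applyF] using hσ (x, u) (by simp)
  | const c =>
      cases u <;> simp [matchOne] at h
      simp [applyF, h.1]
  | app t1 t2 ih1 ih2 =>
      cases u <;> simp [matchOne] at h
      rename_i u1 u2
      rcases h2 : matchOne t1 u1 with _ | l1 <;> rcases h3 : matchOne t2 u2 with _ | l2 <;>
        simp [h2, h3] at h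
      subst h
      have e1 := ih1 h2 (fun p hp => hσ p (by simp [hp]))
      have e2 := ih2 h3 (fun p hp => hσ p (by simp [hp]))
      simp [applyF, e1, e2]

theorem matchOne_complete {t u : Tm} (θ : FSubst) (h : applyF θ t = u) :
    ∃ l, matchOne t u = some l ∧ ∀ p ∈ l, θ p.1 = p.2 := by
  induction t generalizing u with
  | var x =>
      subst h
      exact ⟨[(x, θ x)], by simp [matchOne, applyF], by simp⟩
  | const c =>
      subst h
      exact ⟨[], by simp [matchOne, applyF], by simp⟩
  | app t1 t2 ih1 ih2 =>
      subst h
      obtain ⟨l1, e1, h1⟩ := ih1 (u := applyF θ t1) rfl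
      obtain ⟨l2, e2, h2⟩ := ih2 (u := applyF θ t2) rfl
      refine ⟨l1 ++ l2, by simp [applyF, matchOne, e1, e2], ?_⟩
      intro p hp
      rcases List.mem_append.mp hp with hp | hp
      · exact h1 p hp
      · exact h2 p hp

theorem matchOne_ground {t u : Tm} {l : List (Nat × Tm)} (h : matchOne t u = some l)
    (hg : Ground u) : ∀ p ∈ l, Ground p.2 := by
  induction t generalizing u l with
  | var x =>
      simp [matchOne] at h; subst h; simpa using hg
  | const c =>
      cases u <;> simp [matchOne] at h
      simp [h.2]
  | app t1 t2 ih1 ih2 =>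
      cases u <;> simp [matchOne] at h
      rename_i u1 u2
      rcases h2 : matchOne t1 u1 with _ | l1 <;> rcases h3 : matchOne t2 u2 with _ | l2 <;>
        simp [h2, h3] at h
      subst h
      simp [Ground, FV, List.append_eq_nil_iff] at hg
      intro p hp
      rcases List.mem_append.mp hp with hp | hp
      · exact ih1 h2 hg.1 p hp
      · exact ih2 h3 hg.2 p hp

theorem collect_sound {S : List (Tm × Tm)} {l : List (Nat × Tm)} (h : collect S = some l)
    (σ : FSubst) (hσ : ∀ p ∈ l, σ p.1 = p.2) : Matches σ S := by
  induction S generalizing l with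
  | nil => intro p hp; simp at hp
  | cons q S ih =>
      simp only [collect] at h
      rcases h2 : matchOne q.1 q.2 with _ | l1 <;> rcases h3 : collect S with _ | l2 <;>
        simp [h2, h3] at h
      subst h
      intro p hp
      rcases List.mem_cons.mp hp with hp | hp
      · subst hp
        exact matchOne_sound h2 σ (fun p hp => hσ p (by simp [hp]))
      · exact ih h3 (fun p hp => hσ p (by simp [hp])) p hp

theorem collect_complete {S : List (Tm × Tm)} (θ : FSubst) (h : Matches θ S) :
    ∃ l, collect S = some l ∧ ∀ p ∈ l, θ p.1 = p.2 := by
  induction S with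
  | nil => exact ⟨[], rfl, by simp⟩
  | cons q S ih =>
      obtain ⟨l1, e1, h1⟩ := matchOne_complete θ (h q (by simp))
      obtain ⟨l2, e2, h2⟩ := ih (fun p hp => h p (by simp [hp]))
      refine ⟨l1 ++ l2, by simp [collect, e1, e2], ?_⟩
      intro p hp
      rcases List.mem_append.mp hp with hp | hp
      · exact h1 p hp
      · exact h2 p hp

theorem collect_ground {S : List (Tm × Tm)} {l : List (Nat × Tm)} (h : collect S = some l)
    (hg : ∀ p ∈ S, Ground p.2) : ∀ p ∈ l, Ground p.2 := by
  induction S generalizing l with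
  | nil => simp [collect] at h; subst h; simp
  | cons q S ih =>
      simp only [collect] at h
      rcases h2 : matchOne q.1 q.2 with _ | l1 <;> rcases h3 : collect S with _ | l2 <;>
        simp [h2, h3] at h
      subst h
      intro p hp
      rcases List.mem_append.mp hp with hp | hp
      · exact matchOne_ground h2 (hg q (by simp)) p hp
      · exact ih h3 (fun p hp => hg p (by simp [hp])) p hp

def Consistent (l : List (Nat × Tm)) : Prop :=
  ∀ p ∈ l, ∀ q ∈ l, p.1 = q.1 → p.2 = q.2

instance (l : List (Nat × Tm)) : Decidable (Consistent l) := by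
  unfold Consistent; infer_instance

def mkSubst (l : List (Nat × Tm)) : FSubst := fun x =>
  match l.find? (fun p => p.1 == x) with
  | some p => p.2
  | none => Tm.var x

theorem mkSubst_spec {l : List (Nat × Tm)} (hc : Consistent l) :
    ∀ p ∈ l, mkSubst l p.1 = p.2 := by
  intro p hp
  unfold mkSubst
  rcases hf : l.find? (fun q => q.1 == p.1) with _ | q
  · exfalso
    have := List.find?_eq_none.mp hf p hp
    simp at this
  · have hq1 := List.find?_some hf
    have hqm := List.mem_of_find?_eq_some hf
    simp only [beq_iff_eq] at hq1
    simp only [hf]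
    exact hc q hqm p hp hq1

/-- for a matching problem with all free variables on one side
(the right-hand sides are ground; in this first-order setting every variable
occurrence is strict), matchability is decidable, and when a match exists
there is a most general matching substitution. -/
theorem matching_decidable_and_most_general
    (S : List (Tm × Tm)) (hground : ∀ p ∈ S, Ground p.2) :
    Nonempty (Decidable (∃ σ, Matches σ S)) ∧
    ((∃ σ, Matches σ S) →
      ∃ σ, Matches σ S ∧
        ∀ θ, Matches θ S → ∃ γ, ∀ t, applyF θ t = applyF γ (applyF σ t)) := by
  constructor
  · rcases hc : collect S with _ | l
    · refine ⟨isFalse ?_⟩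
      rintro ⟨θ, hθ⟩
      obtain ⟨l, e, -⟩ := collect_complete θ hθ
      rw [hc] at e; exact nomatch e
    · by_cases h : Consistent l
      · exact ⟨isTrue ⟨mkSubst l, collect_sound hc _ (mkSubst_spec h)⟩⟩
      · refine ⟨isFalse ?_⟩
        rintro ⟨θ, hθ⟩
        obtain ⟨l', e, ha⟩ := collect_complete θ hθ
        rw [hc] at e
        injection e with e; subst e
        exact h (fun p hp q hq hpq => by rw [← ha p hp, ← ha q hq, hpq])
  · rintro ⟨θ0, hθ0⟩
    obtain ⟨l, e, ha0⟩ := collect_complete θ0 hθ0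
    have hc : Consistent l := fun p hp q hq hpq => by rw [← ha0 p hp, ← ha0 q hq, hpq]
    refine ⟨mkSubst l, collect_sound e _ (mkSubst_spec hc), ?_⟩
    intro θ hθ
    obtain ⟨l', e', ha⟩ := collect_complete θ hθ
    rw [e] at e'
    injection e' with e'; subst e'
    refine ⟨θ, ?_⟩
    have hv : ∀ x, θ x = applyF θ (mkSubst l x) := by
      intro x
      unfold mkSubst
      rcases hf : l.find? (fun q => q.1 == x) with _ | q
      · simp [hf, applyF]
      · simp only [hf]
        have hq1 := List.find?_some hf
        have hqm := List.mem_of_find?_eq_some hf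
        simp only [beq_iff_eq] at hq1
        have hg : Ground q.2 := collect_ground e hground q hqm
        rw [ground_applyF hg, ← ha q hqm, hq1]
    intro t
    induction t with
    | var x => simpa [applyF] using hv x
    | const c => rfl
    | app a b iha ihb => simp [applyF, iha, ihb]
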